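/- If a function f : ℂ → ℂ is continuous on an open set U ⊆ ℂ and complex differentiable at every point of U \ X, where X ⊆ U is a compact countable set all of whose accumulation points lie in X and whose set of accumulation points has exactly n elements for some n ≥ 1 (i.e., X is a Polish space with characteristic system (1, n)), then for every triangle △(z₁, z₂, z₃) contained in U, the integral of f along the closed polygonal path [z₁, z₂, z₃, z₁] equals 0. -/

import Mathlib

open Set

/-- The complex line integral of `f` along the segment from `a` to `b`:
`∫_{t ∈ [0,1]} f((1-t)·a + t·b) · (b - a) dt`. -/
noncomputable def segmentIntegral (f : ℂ → ℂ) (a b : ℂ) : ℂ :=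
  ∫ t in (0:ℝ)..1, f ((1 - t) • a + t • b) * (b - a)

/-- The integral of `f` along the closed polygonal path `[z₁, z₂, z₃, z₁]`. -/
noncomputable def triangleIntegral (f : ℂ → ℂ) (z₁ z₂ z₃ : ℂ) : ℂ :=
  segmentIntegral f z₁ z₂ + segmentIntegral f z₂ z₃ + segmentIntegral f z₃ z₁

/-- `w` is an accumulation point of `X`: every neighborhood of `w` contains a
point of `X` other than `w`. -/
def IsAccumulationPoint (w : ℂ) (X : Set ℂ) : Prop :=
  ∀ V ∈ nhds w, ∃ x, x ∈ V ∩ X ∧ x ≠ w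

lemma flip_int (G : ℝ → ℂ) : ∫ t in (0:ℝ)..1, G (1 - t) = ∫ t in (0:ℝ)..1, G t := by
  have h := intervalIntegral.integral_comp_sub_left G 1 (a := (0:ℝ)) (b := 1)
  simpa using h

lemma seg_mul (f : ℂ → ℂ) (a b : ℂ) :
    segmentIntegral f a b = (∫ t in (0:ℝ)..1, f ((1 - t) • a + t • b)) * (b - a) := by
  unfold segmentIntegral; rw [intervalIntegral.integral_mul_const]

lemma seg_rev (f : ℂ → ℂ) (a b : ℂ) : segmentIntegral f b a = - segmentIntegral f a b := by
  rw [seg_mul, seg_mul]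
  have : (∫ t in (0:ℝ)..1, f ((1 - t) • b + t • a))
      = ∫ t in (0:ℝ)..1, (fun s : ℝ => f ((1 - s) • a + s • b)) (1 - t) := by
    apply intervalIntegral.integral_congr; intro t _
    simp only [sub_sub_cancel]; rw [add_comm]
  rw [this, flip_int (fun s : ℝ => f ((1 - s) • a + s • b))]; ring

lemma seg_split (f : ℂ → ℂ) (a b : ℂ)
    (hc : ContinuousOn (fun t : ℝ => f ((1 - t) • a + t • b)) (Icc 0 1)) :
    segmentIntegral f a b =
      segmentIntegral f a ((a + b) / 2) + segmentIntegral f ((a + b) / 2) b := by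
  set F : ℝ → ℂ := fun t => f ((1 - t) • a + t • b) * (b - a) with hF
  have hint : ∀ u v : ℝ, u ∈ Icc (0:ℝ) 1 → v ∈ Icc (0:ℝ) 1 →
      IntervalIntegrable F MeasureTheory.volume u v := by
    intro u v hu hv
    apply ContinuousOn.intervalIntegrable
    apply ContinuousOn.mul _ continuousOn_const
    apply hc.mono
    intro t ht
    rcases le_total u v with h | h
    · rw [uIcc_of_le h] at ht; exact ⟨le_trans hu.1 ht.1, le_trans ht.2 hv.2⟩
    · rw [uIcc_of_ge h] at ht; exact ⟨le_trans hv.1 ht.1, le_trans ht.2 hu.2⟩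
  have e1 : segmentIntegral f a ((a + b) / 2) = ∫ t in (0:ℝ)..(1/2), F t := by
    have comp : ∀ s : ℝ, f ((1 - s) • a + s • ((a + b)/2)) * ((a + b)/2 - a)
        = (2:ℂ)⁻¹ * F (s / 2) := by
      intro s
      have : (1 - s) • a + s • ((a + b)/2) = (1 - s/2) • a + (s/2) • b := by
        simp only [Complex.real_smul]; push_cast; ring
      rw [this, hF]; ring
    unfold segmentIntegral
    rw [intervalIntegral.integral_congr (g := fun s : ℝ => (2:ℂ)⁻¹ * F (s/2))
      (fun s _ => comp s)]
    rw [intervalIntegral.integral_const_mul,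
      intervalIntegral.integral_comp_div (a := (0:ℝ)) (b := 1) (f := F) (by norm_num)]
    norm_num; rw [← mul_assoc]; norm_num
  have e2 : segmentIntegral f ((a + b) / 2) b = ∫ t in (1/2:ℝ)..1, F t := by
    have comp : ∀ s : ℝ, f ((1 - s) • ((a + b)/2) + s • b) * (b - (a + b)/2)
        = (2:ℂ)⁻¹ * (fun u : ℝ => F (u / 2)) (s + 1) := by
      intro s
      have : (1 - s) • ((a + b)/2) + s • b = (1 - (s+1)/2) • a + ((s+1)/2) • b := by
        simp only [Complex.real_smul]; push_cast; ring
      rw [this, hF]; ring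
    unfold segmentIntegral
    rw [intervalIntegral.integral_congr (g := fun s : ℝ => (2:ℂ)⁻¹ * (fun u : ℝ => F (u/2)) (s+1))
      (fun s _ => comp s)]
    rw [intervalIntegral.integral_const_mul,
      intervalIntegral.integral_comp_add_right (a := (0:ℝ)) (b := 1) (fun u : ℝ => F (u/2)) 1,
      intervalIntegral.integral_comp_div (a := (0+1:ℝ)) (b := 1+1) (f := F) (by norm_num)]
    norm_num; rw [← mul_assoc]; norm_num
  rw [e1, e2]
  have := intervalIntegral.integral_add_adjacent_intervals
    (hint 0 (1/2) (by norm_num) (by norm_num)) (hint (1/2) 1 (by norm_num) (by norm_num))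
  rw [this]; rfl

lemma seg_ftc (f g : ℂ → ℂ) (V : Set ℂ) (hV : IsOpen V)
    (hg : ∀ z ∈ V, HasDerivAt g (f z) z) (hfc : ContinuousOn f V)
    (a b : ℂ) (hseg : segment ℝ a b ⊆ V) :
    segmentIntegral f a b = g b - g a := by
  set γ : ℝ → ℂ := fun t => (1 - t) • a + t • b with hγ
  have hmem : ∀ t ∈ Icc (0:ℝ) 1, γ t ∈ V := by
    intro t ht
    apply hseg
    rw [segment_eq_image]
    exact ⟨t, ht, rfl⟩
  have hγc : Continuous γ := by
    apply Continuous.add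
    · exact (continuous_const.sub continuous_id).smul continuous_const
    · exact continuous_id.smul continuous_const
  have hγd : ∀ t : ℝ, HasDerivAt γ (b - a) t := by
    intro t
    have h1 : HasDerivAt (fun t : ℝ => (1 - t) • a) ((-1 : ℝ) • a) t := by
      exact (((hasDerivAt_id t).const_sub 1)).smul_const a
    have h2 : HasDerivAt (fun t : ℝ => t • b) ((1:ℝ) • b) t :=
      (hasDerivAt_id t).smul_const b
    have h3 := h1.add h2
    simp only [neg_smul, one_smul, neg_add_eq_sub] at h3; exact h3
  have key : ∀ t ∈ uIcc (0:ℝ) 1, HasDerivAt (fun t => g (γ t)) (f (γ t) * (b - a)) t := by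
    rw [uIcc_of_le (by norm_num : (0:ℝ) ≤ 1)]
    intro t ht
    have := (hg (γ t) (hmem t ht)).scomp t (hγd t)
    rw [mul_comm]; exact this
  have hint : IntervalIntegrable (fun t => f (γ t) * (b - a)) MeasureTheory.volume 0 1 := by
    apply ContinuousOn.intervalIntegrable
    rw [uIcc_of_le (by norm_num : (0:ℝ) ≤ 1)]
    exact ((hfc.comp hγc.continuousOn hmem).mul continuousOn_const)
  have hres := intervalIntegral.integral_eq_sub_of_hasDerivAt key hint
  have h0 : γ 0 = a := by simp [hγ]
  have h1' : γ 1 = b := by simp [hγ]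
  rw [h0, h1'] at hres
  exact hres

lemma tri_zero_of_primitive (f g : ℂ → ℂ) (V : Set ℂ) (hV : IsOpen V)
    (hg : ∀ z ∈ V, HasDerivAt g (f z) z) (hfc : ContinuousOn f V)
    (a b c : ℂ) (hull : convexHull ℝ {a, b, c} ⊆ V) :
    triangleIntegral f a b c = 0 := by
  have hmem : ∀ x ∈ ({a, b, c} : Set ℂ), x ∈ convexHull ℝ {a, b, c} :=
    fun x hx => subset_convexHull ℝ _ hx
  have hseg : ∀ x y, x ∈ ({a,b,c} : Set ℂ) → y ∈ ({a,b,c} : Set ℂ) → segment ℝ x y ⊆ V :=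
    fun x y hx hy => subset_trans
      ((convex_convexHull ℝ _).segment_subset (hmem x hx) (hmem y hy)) hull
  unfold triangleIntegral
  rw [seg_ftc f g V hV hg hfc a b (hseg a b (by simp) (by simp)),
    seg_ftc f g V hV hg hfc b c (hseg b c (by simp) (by simp)),
    seg_ftc f g V hV hg hfc c a (hseg c a (by simp) (by simp))]
  ring

open scoped NNReal ENNReal in
lemma primitive_on_ball {f : ℂ → ℂ} {p : FormalMultilinearSeries ℂ ℂ ℂ} {x : ℂ} {R : ℝ≥0}
    (hR : 0 < R) (hps : HasFPowerSeriesOnBall f p x R) :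
    ∃ g : ℂ → ℂ, ∀ z ∈ Metric.ball x ((R : ℝ) / 2), HasDerivAt g (f z) z := by
  set r : ℝ := (R : ℝ) / 2 with hr
  have hr0 : 0 < r := by positivity
  set t : Set ℂ := Metric.ball x r with ht
  set G : ℕ → ℂ → ℂ := fun n z => (p.coeff n / (n + 1)) * (z - x) ^ (n + 1) with hG
  set G' : ℕ → ℂ → ℂ := fun n z => p.coeff n * (z - x) ^ n with hG'
  set u : ℕ → ℝ := fun n => ‖p n‖ * r ^ n with hu
  set rn : ℝ≥0 := ⟨r, hr0.le⟩ with hrn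
  have hrrad : (rn : ℝ≥0∞) < p.radius := by
    refine lt_of_lt_of_le ?_ hps.r_le
    rw [ENNReal.coe_lt_coe, ← NNReal.coe_lt_coe]
    have : (0:ℝ) < (R:ℝ) := hR
    show r < (R:ℝ); rw [hr]
    linarith
  have hsu : Summable u := by
    have := p.summable_norm_mul_pow hrrad
    exact this
  have hderiv : ∀ (n : ℕ) (z : ℂ), HasDerivAt (G n) (G' n z) z := by
    intro n z
    have h1 : HasDerivAt (fun z : ℂ => (z - x) ^ (n + 1))
        (((n:ℂ) + 1) * (z - x) ^ n) z := by
      have := ((hasDerivAt_id z).sub_const x).pow (n + 1)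
      simp at this; exact this
    have h2 := h1.const_mul (p.coeff n / (n + 1))
    refine h2.congr_deriv ?_
    have hne : ((n : ℂ) + 1) ≠ 0 := Nat.cast_add_one_ne_zero n
    rw [← mul_assoc, div_mul_cancel₀ _ hne]
  have hbound : ∀ (n : ℕ) (z : ℂ), z ∈ t → ‖G' n z‖ ≤ u n := by
    intro n z hz
    have hcoeff : ‖p.coeff n‖ ≤ ‖p n‖ := by
      have h := (p n).le_opNorm (fun _ => (1:ℂ))
      have he : p.coeff n = p n (fun _ => 1) := rfl
      rw [he]
      simpa using h
    have hzx : ‖z - x‖ ≤ r := by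
      rw [Metric.mem_ball, dist_eq_norm] at hz
      exact hz.le
    calc ‖G' n z‖ = ‖p.coeff n‖ * ‖z - x‖ ^ n := by
          simp [hG', norm_mul, norm_pow]
      _ ≤ ‖p n‖ * r ^ n := by
          apply mul_le_mul hcoeff (pow_le_pow_left₀ (norm_nonneg _) hzx n)
            (by positivity) (norm_nonneg _)
  have hsum0 : Summable (fun n => G n x) := by
    have : (fun n => G n x) = fun _ => (0:ℂ) := by
      funext n; simp [hG]
    rw [this]; exact summable_zero
  refine ⟨fun z => ∑' n, G n z, fun z hz => ?_⟩
  have hder := hasDerivAt_tsum_of_isPreconnected hsu Metric.isOpen_ball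
    (convex_ball x r).isPreconnected (fun n y _ => hderiv n y) (fun n y hy => hbound n y hy) (Metric.mem_ball_self hr0) hsum0 hz
  have hfz : (∑' n, G' n z) = f z := by
    have hmem : z - x ∈ Metric.eball (0:ℂ) (R : ℝ≥0∞) := by
      rw [Metric.emetric_ball_nnreal, Metric.mem_ball, dist_eq_norm, sub_zero]
      rw [Metric.mem_ball, dist_eq_norm] at hz
      have : (0:ℝ) < (R:ℝ) := hR
      calc ‖z - x‖ < r := hz
        _ < R := by rw [hr]; linarith
    have hs := hps.hasSum hmem
    simp only [add_sub_cancel] at hs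
    have : (fun n => p n fun _ => z - x) = fun n => G' n z := by
      funext n
      rw [p.apply_eq_pow_smul_coeff, hG']
      simp [smul_eq_mul]; ring
    rw [this] at hs
    exact hs.tsum_eq
  rw [← hfz]
  exact hder

lemma seg_cont (f : ℂ → ℂ) (U : Set ℂ) (hf : ContinuousOn f U) (a b : ℂ)
    (hseg : segment ℝ a b ⊆ U) :
    ContinuousOn (fun t : ℝ => f ((1 - t) • a + t • b)) (Icc 0 1) := by
  apply hf.comp
  · apply Continuous.continuousOn
    exact ((continuous_const.sub continuous_id).smul continuous_const).add
      (continuous_id.smul continuous_const)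
  · intro t ht
    apply hseg
    rw [segment_eq_image]
    exact ⟨t, ht, rfl⟩

lemma tri_subdiv (f : ℂ → ℂ) (U : Set ℂ) (hf : ContinuousOn f U) (a b c : ℂ)
    (hull : convexHull ℝ {a, b, c} ⊆ U) :
    triangleIntegral f a b c =
      triangleIntegral f a ((a+b)/2) ((c+a)/2) + triangleIntegral f ((a+b)/2) b ((b+c)/2)
        + triangleIntegral f ((c+a)/2) ((b+c)/2) c
        + triangleIntegral f ((a+b)/2) ((b+c)/2) ((c+a)/2) := by
  have hmem : ∀ x ∈ ({a, b, c} : Set ℂ), x ∈ convexHull ℝ {a, b, c} :=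
    fun x hx => subset_convexHull ℝ _ hx
  have hseg : ∀ x y, x ∈ ({a,b,c} : Set ℂ) → y ∈ ({a,b,c} : Set ℂ) →
      ContinuousOn (fun t : ℝ => f ((1 - t) • x + t • y)) (Icc 0 1) :=
    fun x y hx hy => seg_cont f U hf x y (subset_trans
      ((convex_convexHull ℝ _).segment_subset (hmem x hx) (hmem y hy)) hull)
  have s1 := seg_split f a b (hseg a b (by simp) (by simp))
  have s2 := seg_split f b c (hseg b c (by simp) (by simp))
  have s3 := seg_split f c a (hseg c a (by simp) (by simp))
  unfold triangleIntegral
  rw [s1, s2, s3]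
  rw [seg_rev f ((a+b)/2) ((c+a)/2), seg_rev f ((b+c)/2) ((a+b)/2),
    seg_rev f ((c+a)/2) ((b+c)/2)]
  ring

lemma dist_half (u v p q : ℂ) (h : u - v = (p - q)/2) : dist u v = dist p q / 2 := by
  rw [Complex.dist_eq, Complex.dist_eq, h, norm_div]
  simp

theorem stmt_2 (f : ℂ → ℂ) (U : Set ℂ) (hU : IsOpen U)
    (hf : ContinuousOn f U) (X : Set ℂ) (hXU : X ⊆ U)
    (hXcomp : IsCompact X) (hXcount : X.Countable)
    (hacc : {w | IsAccumulationPoint w X} ⊆ X)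
    (n : ℕ) (hn : 1 ≤ n) (hcard : {w | IsAccumulationPoint w X}.ncard = n)
    (hd : ∀ z ∈ U \ X, DifferentiableAt ℂ f z)
    (z₁ z₂ z₃ : ℂ) (htri : convexHull ℝ {z₁, z₂, z₃} ⊆ U) :
    triangleIntegral f z₁ z₂ z₃ = 0 := by
  have hKcomp : IsCompact (convexHull ℝ {z₁, z₂, z₃}) := by
    apply Set.Finite.isCompact_convexHull
    exact (Set.finite_singleton z₃).insert z₂ |>.insert z₁
  -- choose radii
  have hex : ∀ x : convexHull ℝ {z₁, z₂, z₃}, ∃ ε : ℝ, 0 < ε ∧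
      Metric.closedBall (x:ℂ) ε ⊆ U := by
    intro x
    have : U ∈ nhds (x:ℂ) := hU.mem_nhds (htri x.2)
    rw [Metric.nhds_basis_closedBall.mem_iff] at this
    obtain ⟨ε, hε, hsub⟩ := this
    exact ⟨ε, hε, hsub⟩
  choose ε hε hballU using hex
  -- primitive on each ball
  have hprim : ∀ x : convexHull ℝ {z₁, z₂, z₃}, ∃ g : ℂ → ℂ,
      ∀ z ∈ Metric.ball (x:ℂ) (ε x / 2), HasDerivAt g (f z) z := by
    intro x
    have hR0 : 0 < (ε x).toNNReal := Real.toNNReal_pos.mpr (hε x)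
    have hcoe : ((ε x).toNNReal : ℝ) = ε x := Real.coe_toNNReal _ (hε x).le
    have hcb : Metric.closedBall (x:ℂ) ((ε x).toNNReal : ℝ) ⊆ U := by
      rw [hcoe]; exact hballU x
    have hps := Complex.hasFPowerSeriesOnBall_of_differentiable_off_countable
      (R := (ε x).toNNReal) (c := (x:ℂ)) hXcount (hf.mono hcb)
      (fun z hz => hd z ⟨hcb (Metric.ball_subset_closedBall hz.1), hz.2⟩) hR0
    obtain ⟨g, hg⟩ := primitive_on_ball hR0 hps
    rw [hcoe] at hg
    exact ⟨g, hg⟩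
  -- Lebesgue number
  have hcover : convexHull ℝ {z₁, z₂, z₃} ⊆
      ⋃ x : convexHull ℝ {z₁, z₂, z₃}, Metric.ball (x:ℂ) (ε x / 2) := by
    intro y hy
    exact Set.mem_iUnion.mpr ⟨⟨y, hy⟩, Metric.mem_ball_self (by have := hε ⟨y, hy⟩; linarith)⟩
  obtain ⟨δ, hδ0, hδ⟩ := lebesgue_number_lemma_of_metric hKcomp
    (fun _ => Metric.isOpen_ball) hcover
  -- base case
  have base : ∀ a b c : ℂ, a ∈ convexHull ℝ {z₁, z₂, z₃} → b ∈ convexHull ℝ {z₁, z₂, z₃} →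
      c ∈ convexHull ℝ {z₁, z₂, z₃} → dist a b ≤ δ/2 → dist b c ≤ δ/2 → dist c a ≤ δ/2 →
      triangleIntegral f a b c = 0 := by
    intro a b c ha hb hc hab hbc hca
    obtain ⟨x, hx⟩ := hδ a ha
    obtain ⟨g, hg⟩ := hprim x
    have hballU' : Metric.ball a δ ⊆ U := by
      refine subset_trans hx (subset_trans ?_ (hballU x))
      refine subset_trans Metric.ball_subset_closedBall (Metric.closedBall_subset_closedBall ?_)
      have := hε x; linarith
    apply tri_zero_of_primitive f g (Metric.ball a δ) Metric.isOpen_ball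
      (fun z hz => hg z (hx hz)) (hf.mono hballU') a b c
    apply convexHull_min _ (convex_ball a δ)
    intro y hy
    simp only [Set.mem_insert_iff, Set.mem_singleton_iff] at hy
    rcases hy with rfl | rfl | rfl
    · exact Metric.mem_ball_self hδ0
    · rw [Metric.mem_ball, dist_comm]; linarith
    · rw [Metric.mem_ball]; linarith
  -- induction on size
  have key : ∀ k : ℕ, ∀ a b c : ℂ, a ∈ convexHull ℝ {z₁, z₂, z₃} →
      b ∈ convexHull ℝ {z₁, z₂, z₃} → c ∈ convexHull ℝ {z₁, z₂, z₃} →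
      dist a b ≤ δ/2 * 2^k → dist b c ≤ δ/2 * 2^k → dist c a ≤ δ/2 * 2^k →
      triangleIntegral f a b c = 0 := by
    intro k
    induction k with
    | zero => simpa using base
    | succ k ih =>
      intro a b c ha hb hc hab hbc hca
      have hKconv := convex_convexHull ℝ ({z₁, z₂, z₃} : Set ℂ)
      have hmid : ∀ p q : ℂ, p ∈ convexHull ℝ {z₁, z₂, z₃} → q ∈ convexHull ℝ {z₁, z₂, z₃} →
          (p + q)/2 ∈ convexHull ℝ {z₁, z₂, z₃} := by
        intro p q hp hq
        apply hKconv.segment_subset hp hq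
        rw [segment_eq_image]
        refine ⟨1/2, by norm_num, ?_⟩
        simp only [Complex.real_smul]
        push_cast
        ring
      have hull : convexHull ℝ {a, b, c} ⊆ U := by
        refine subset_trans (convexHull_min ?_ hKconv) htri
        intro y hy
        simp only [Set.mem_insert_iff, Set.mem_singleton_iff] at hy
        rcases hy with rfl | rfl | rfl <;> assumption
      rw [tri_subdiv f U hf a b c hull]
      have h2 : ∀ p q : ℂ, dist p q ≤ δ/2 * 2^(k+1) → dist p q / 2 ≤ δ/2 * 2^k := by
        intro p q h
        have : (2:ℝ)^(k+1) = 2 * 2^k := by ring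
        rw [this] at h
        linarith
      have m1 := hmid a b ha hb
      have m2 := hmid b c hb hc
      have m3 := hmid c a hc ha
      have d1 : dist a ((a+b)/2) = dist a b / 2 := dist_half _ _ _ _ (by ring)
      have d2 : dist ((a+b)/2) ((c+a)/2) = dist b c / 2 := dist_half _ _ _ _ (by ring)
      have d3 : dist ((c+a)/2) a = dist c a / 2 := dist_half _ _ _ _ (by ring)
      have d4 : dist ((a+b)/2) b = dist a b / 2 := dist_half _ _ _ _ (by ring)
      have d5 : dist b ((b+c)/2) = dist b c / 2 := dist_half _ _ _ _ (by ring)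
      have d6 : dist ((b+c)/2) ((a+b)/2) = dist c a / 2 := dist_half _ _ _ _ (by ring)
      have d7 : dist ((c+a)/2) ((b+c)/2) = dist a b / 2 := dist_half _ _ _ _ (by ring)
      have d8 : dist ((b+c)/2) c = dist b c / 2 := dist_half _ _ _ _ (by ring)
      have d9 : dist c ((c+a)/2) = dist c a / 2 := dist_half _ _ _ _ (by ring)
      rw [ih a ((a+b)/2) ((c+a)/2) ha m1 m3 (by rw [d1]; exact h2 _ _ hab)
            (by rw [d2]; exact h2 _ _ hbc) (by rw [d3]; exact h2 _ _ hca),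
          ih ((a+b)/2) b ((b+c)/2) m1 hb m2 (by rw [d4]; exact h2 _ _ hab)
            (by rw [d5]; exact h2 _ _ hbc) (by rw [d6]; exact h2 _ _ hca),
          ih ((c+a)/2) ((b+c)/2) c m3 m2 hc (by rw [d7]; exact h2 _ _ hab)
            (by rw [d8]; exact h2 _ _ hbc) (by rw [d9]; exact h2 _ _ hca),
          ih ((a+b)/2) ((b+c)/2) ((c+a)/2) m1 m2 m3
            (by rw [show dist ((a+b)/2) ((b+c)/2) = dist a c / 2 from dist_half _ _ _ _ (by ring)]
                rw [dist_comm a c]; exact h2 _ _ hca)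
            (by rw [show dist ((b+c)/2) ((c+a)/2) = dist b a / 2 from dist_half _ _ _ _ (by ring)]
                rw [dist_comm b a]; exact h2 _ _ hab)
            (by rw [show dist ((c+a)/2) ((a+b)/2) = dist c b / 2 from dist_half _ _ _ _ (by ring)]
                rw [dist_comm c b]; exact h2 _ _ hbc)]
      ring
  -- conclude
  set M : ℝ := max (dist z₁ z₂) (max (dist z₂ z₃) (dist z₃ z₁)) with hM
  obtain ⟨k, hk⟩ := exists_nat_gt (M / (δ/2))
  have hk2 : M ≤ δ/2 * 2^k := by
    have hkk : (k:ℝ) ≤ 2^k := by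
      exact_mod_cast (Nat.lt_two_pow_self (n := k)).le
    have : M / (δ/2) < 2^k := lt_of_lt_of_le hk hkk
    rw [div_lt_iff₀ (by linarith)] at this
    linarith [this]
  have hz1 : z₁ ∈ convexHull ℝ {z₁, z₂, z₃} := subset_convexHull ℝ _ (by simp)
  have hz2 : z₂ ∈ convexHull ℝ {z₁, z₂, z₃} := subset_convexHull ℝ _ (by simp)
  have hz3 : z₃ ∈ convexHull ℝ {z₁, z₂, z₃} := subset_convexHull ℝ _ (by simp)
  exact key k z₁ z₂ z₃ hz1 hz2 hz3
    (le_trans (le_max_left _ _) hk2)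
    (le_trans (le_trans (le_max_left _ _) (le_max_right _ _)) hk2)
    (le_trans (le_trans (le_max_right _ _) (le_max_right _ _)) hk2)
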